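/- Let (x₁,x₂,x₃,x₄) be a positive real solution of x₁²+x₂²+x₃²+x₄² = x₁x₂x₃x₄ with x₁ ≤ x₂ ≤ x₃ ≤ x₄, write x₄ = x₃ + δ, and suppose ε > 0 satisfies (1+δ/x₃)x₁x₂ − 1 − (1+δ/x₃)² > ε/2. Then x₃² ≤ (2/ε)(x₁² + x₂²). -/

import Mathlib

theorem stmt_8 (x1 x2 x3 x4 δ ε : ℝ) (h1 : 0 < x1) (h2 : 0 < x2) (h3 : 0 < x3) (h4 : 0 < x4)
    (heq : x1 ^ 2 + x2 ^ 2 + x3 ^ 2 + x4 ^ 2 = x1 * x2 * x3 * x4)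
    (h12 : x1 ≤ x2) (h23 : x2 ≤ x3) (h34 : x3 ≤ x4)
    (hδ : x4 = x3 + δ) (hε : 0 < ε)
    (hkey : ε / 2 < (1 + δ / x3) * (x1 * x2) - 1 - (1 + δ / x3) ^ 2) :
    x3 ^ 2 ≤ (2 / ε) * (x1 ^ 2 + x2 ^ 2) := by
  have hx3 : x3 ≠ 0 := h3.ne'
  have key : x3 ^ 2 * ((1 + δ / x3) * (x1 * x2) - 1 - (1 + δ / x3) ^ 2) = x1 ^ 2 + x2 ^ 2 := by
    have hδ' : δ = x4 - x3 := by linarith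
    subst hδ'
    field_simp
    linear_combination (-1) * heq
  have h5 : x3 ^ 2 * (ε / 2) ≤ x1 ^ 2 + x2 ^ 2 := by
    rw [← key]
    have := sq_nonneg x3
    nlinarith
  rw [div_mul_eq_mul_div, le_div_iff₀ hε]
  nlinarith
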